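/- Let α > 0, s ≥ 0, and W ∈ B^s(ℝ^d). The operator T u := (α − Δ)^{-1}(W u) is a bounded linear operator from B^s(ℝ^d) to itself with operator norm at most 2^{s/2} ‖W‖_{B^s} / α. -/

import Mathlib

open MeasureTheory Complex

noncomputable section

/-- Euclidean space `ℝ^d`. -/
abbrev Ed (d : ℕ) := EuclideanSpace ℝ (Fin d)

/-- Inverse Fourier transform (with the convention of the paper):
`g(x) = ∫ v(ξ) e^{i x·ξ} dξ`, so that `v = ĝ` is the Fourier transform of `g`. -/
def invFT {d : ℕ} (v : Ed d → ℂ) (x : Ed d) : ℂ :=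
  ∫ ξ, v ξ * Complex.exp (Complex.I * ((inner ℝ ξ x : ℝ) : ℂ))

/-- `g` has Fourier transform (profile) `v`, i.e. `ĝ = v ∈ L¹` and
`g(x) = ∫ v(ξ) e^{i x·ξ} dξ`. -/
def HasFT {d : ℕ} (g : Ed d → ℂ) (v : Ed d → ℂ) : Prop :=
  Integrable v ∧ ∀ x, g x = invFT v x

/-- The spectral Barron weight `(1+|ξ|²)^{s/2}`. -/
def bWeight (s : ℝ) {d : ℕ} (ξ : Ed d) : ℝ := (1 + ‖ξ‖ ^ 2) ^ (s / 2)

/-- The spectral Barron norm `∫ |ĝ(ξ)| (1+|ξ|²)^{s/2} dξ`, expressed in terms of `v = ĝ`. -/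
def bNorm {d : ℕ} (s : ℝ) (v : Ed d → ℂ) : ℝ := ∫ ξ, ‖v ξ‖ * bWeight s ξ

/-- Membership in the spectral Barron space `B^s`, on the Fourier side. -/
def bMem {d : ℕ} (s : ℝ) (v : Ed d → ℂ) : Prop :=
  Integrable (fun ξ => ‖v ξ‖ * bWeight s ξ)

lemma bWeight_pos (s : ℝ) {d : ℕ} (ξ : Ed d) : 0 < bWeight s ξ := by
  unfold bWeight; positivity

lemma bWeight_continuous (s : ℝ) {d : ℕ} : Continuous (fun ξ : Ed d => bWeight s ξ) := by
  apply Continuous.rpow_const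
  · exact continuous_const.add (continuous_norm.pow 2)
  · intro ξ; left; positivity

lemma bWeight_peetre (s : ℝ) (hs : 0 ≤ s) {d : ℕ} (ξ η : Ed d) :
    bWeight s ξ ≤ (2:ℝ) ^ (s/2) * bWeight s η * bWeight s (ξ - η) := by
  unfold bWeight
  have h1 : (1 + ‖ξ‖^2) ≤ 2 * (1 + ‖η‖^2) * (1 + ‖ξ - η‖^2) := by
    have hn : ‖ξ‖ ≤ ‖η‖ + ‖ξ - η‖ := by
      calc ‖ξ‖ = ‖η + (ξ - η)‖ := by rw [add_sub_cancel]
      _ ≤ ‖η‖ + ‖ξ - η‖ := norm_add_le _ _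
    have h2 : ‖ξ‖^2 ≤ (‖η‖ + ‖ξ - η‖)^2 := by
      apply pow_le_pow_left₀ (norm_nonneg _) hn
    nlinarith [sq_nonneg (‖η‖ - ‖ξ - η‖), sq_nonneg (‖η‖ * ‖ξ - η‖), norm_nonneg η,
      norm_nonneg (ξ - η)]
  calc (1 + ‖ξ‖^2) ^ (s/2) ≤ (2 * (1 + ‖η‖^2) * (1 + ‖ξ - η‖^2)) ^ (s/2) := by
        apply Real.rpow_le_rpow (by positivity) h1 (by positivity)
    _ = (2:ℝ)^(s/2) * (1 + ‖η‖^2)^(s/2) * (1 + ‖ξ - η‖^2)^(s/2) := by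
        rw [Real.mul_rpow (by positivity) (by positivity),
          Real.mul_rpow (by positivity) (by positivity)]

/-- For `α > 0`, `s ≥ 0`, `W ∈ B^s(ℝ^d)`, the operator
`T u = (α - Δ)⁻¹(W u)` (whose Fourier transform is `(Ŵ ∗ û)(ξ)/(α+|ξ|²)`) maps
`B^s(ℝ^d)` boundedly to itself with operator norm at most `2^{s/2} ‖W‖_{B^s} / α`. -/
theorem barron_T_bounded {d : ℕ} (s α : ℝ) (hα : 0 < α) (hs : 0 ≤ s)
    (W : Ed d → ℝ) (vW : Ed d → ℂ) (hW : HasFT (fun x => (W x : ℂ)) vW)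
    (hWs : bMem s vW) :
    ∀ (u : Ed d → ℝ) (vu : Ed d → ℂ), HasFT (fun x => (u x : ℂ)) vu → bMem s vu →
      bMem s (fun ξ => (∫ η, vW η * vu (ξ - η)) / ((α : ℂ) + (‖ξ‖ : ℂ) ^ 2)) ∧
      bNorm s (fun ξ => (∫ η, vW η * vu (ξ - η)) / ((α : ℂ) + (‖ξ‖ : ℂ) ^ 2)) ≤
        (2 : ℝ) ^ (s / 2) * bNorm s vW / α * bNorm s vu := by
  intro u vu hu hus
  set F : Ed d → ℝ := fun η => ‖vW η‖ * bWeight s η with hFdef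
  set G : Ed d → ℝ := fun η => ‖vu η‖ * bWeight s η with hGdef
  have hF : Integrable F := hWs
  have hG : Integrable G := hus
  set L : ℝ →L[ℝ] ℝ →L[ℝ] ℝ := ContinuousLinearMap.mul ℝ ℝ
  set Lc : ℂ →L[ℝ] ℂ →L[ℝ] ℂ := ContinuousLinearMap.mul ℝ ℂ
  -- convolution of the weighted norms
  have hFGprod : Integrable (fun p : Ed d × Ed d => F p.2 * G (p.1 - p.2))
      ((volume : Measure (Ed d)).prod volume) := hF.convolution_integrand L hG
  have hFGconv : Integrable (fun ξ => ∫ η, F η * G (ξ - η)) :=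
    hFGprod.integral_prod_left
  have hFGae : ∀ᵐ ξ : Ed d, Integrable (fun η => F η * G (ξ - η)) := hFGprod.prod_right_ae
  have hconvnonneg : ∀ ξ : Ed d, 0 ≤ ∫ η, F η * G (ξ - η) := fun ξ =>
    integral_nonneg fun η => mul_nonneg (mul_nonneg (norm_nonneg _) (bWeight_pos s η).le)
      (mul_nonneg (norm_nonneg _) (bWeight_pos s _).le)
  -- measurability of the target function
  have hconvInt : Integrable (fun ξ => ∫ η, vW η * vu (ξ - η)) :=
    (hW.1.convolution_integrand Lc hu.1).integral_prod_left
  have hTmeas : AEStronglyMeasurable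
      (fun ξ : Ed d => ‖(∫ η, vW η * vu (ξ - η)) / ((α : ℂ) + (‖ξ‖ : ℂ) ^ 2)‖ * bWeight s ξ)
      volume := by
    apply AEStronglyMeasurable.mul _ (bWeight_continuous s).aestronglyMeasurable
    apply AEStronglyMeasurable.norm
    have hcont : Continuous (fun ξ : Ed d => (α : ℂ) + (‖ξ‖ : ℂ) ^ 2) :=
      continuous_const.add ((Complex.continuous_ofReal.comp continuous_norm).pow 2)
    have hne : ∀ ξ : Ed d, (α : ℂ) + (‖ξ‖ : ℂ) ^ 2 ≠ 0 := by
      intro ξ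
      have : (α : ℂ) + (‖ξ‖ : ℂ) ^ 2 = ((α + ‖ξ‖ ^ 2 : ℝ) : ℂ) := by push_cast; ring
      rw [this]
      exact_mod_cast ne_of_gt (by positivity : (0:ℝ) < α + ‖ξ‖ ^ 2)
    simp only [div_eq_mul_inv]
    exact hconvInt.aestronglyMeasurable.mul (hcont.inv₀ hne).aestronglyMeasurable
  -- the key pointwise bound
  have hden : ∀ ξ : Ed d, ‖(α : ℂ) + (‖ξ‖ : ℂ) ^ 2‖ = α + ‖ξ‖ ^ 2 := by
    intro ξ
    have : (α : ℂ) + (‖ξ‖ : ℂ) ^ 2 = ((α + ‖ξ‖ ^ 2 : ℝ) : ℂ) := by push_cast; ring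
    rw [this, Complex.norm_real, Real.norm_of_nonneg (by positivity)]
  have hkey : ∀ᵐ ξ : Ed d,
      ‖(∫ η, vW η * vu (ξ - η)) / ((α : ℂ) + (‖ξ‖ : ℂ) ^ 2)‖ * bWeight s ξ ≤
        (2:ℝ)^(s/2) / α * ∫ η, F η * G (ξ - η) := by
    filter_upwards [hFGae] with ξ hint
    have hstep1 : ‖∫ η, vW η * vu (ξ - η)‖ * bWeight s ξ ≤
        (2:ℝ)^(s/2) * ∫ η, F η * G (ξ - η) := by
      calc ‖∫ η, vW η * vu (ξ - η)‖ * bWeight s ξ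
          ≤ (∫ η, ‖vW η * vu (ξ - η)‖) * bWeight s ξ :=
            mul_le_mul_of_nonneg_right (norm_integral_le_integral_norm _) (bWeight_pos s ξ).le
        _ = ∫ η, ‖vW η * vu (ξ - η)‖ * bWeight s ξ := (integral_mul_const _ _).symm
        _ ≤ ∫ η, (2:ℝ)^(s/2) * (F η * G (ξ - η)) := by
            apply integral_mono_of_nonneg
            · exact Filter.Eventually.of_forall fun η =>
                mul_nonneg (norm_nonneg _) (bWeight_pos s ξ).le
            · exact hint.const_mul _
            · filter_upwards with η
              rw [norm_mul]
              calc ‖vW η‖ * ‖vu (ξ - η)‖ * bWeight s ξ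
                  ≤ ‖vW η‖ * ‖vu (ξ - η)‖ *
                    ((2:ℝ)^(s/2) * bWeight s η * bWeight s (ξ - η)) :=
                    mul_le_mul_of_nonneg_left (bWeight_peetre s hs ξ η)
                      (mul_nonneg (norm_nonneg _) (norm_nonneg _))
                _ = (2:ℝ)^(s/2) * (F η * G (ξ - η)) := by
                    simp only [hFdef, hGdef]; ring
        _ = (2:ℝ)^(s/2) * ∫ η, F η * G (ξ - η) := integral_const_mul _ _
    rw [norm_div, hden ξ, div_mul_eq_mul_div, div_le_iff₀ (by positivity)]
    rw [div_mul_eq_mul_div, div_mul_eq_mul_div, le_div_iff₀ hα]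
    calc ‖∫ η, vW η * vu (ξ - η)‖ * bWeight s ξ * α
        ≤ (2:ℝ)^(s/2) * (∫ η, F η * G (ξ - η)) * α := by
          exact mul_le_mul_of_nonneg_right hstep1 hα.le
      _ ≤ (2:ℝ)^(s/2) * (∫ η, F η * G (ξ - η)) * (α + ‖ξ‖^2) := by
          exact mul_le_mul_of_nonneg_left (by nlinarith [sq_nonneg ‖ξ‖])
            (mul_nonneg (by positivity) (hconvnonneg ξ))
  have hbMem : bMem s (fun ξ => (∫ η, vW η * vu (ξ - η)) / ((α : ℂ) + (‖ξ‖ : ℂ) ^ 2)) := by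
    apply Integrable.mono' (hFGconv.const_mul ((2:ℝ)^(s/2) / α)) hTmeas
    filter_upwards [hkey] with ξ h
    rwa [Real.norm_of_nonneg (mul_nonneg (norm_nonneg _) (bWeight_pos s ξ).le)]
  refine ⟨hbMem, ?_⟩
  have hconvint : (∫ ξ, ∫ η, F η * G (ξ - η)) = bNorm s vW * bNorm s vu := by
    have := integral_convolution L hF hG
    simpa [convolution, bNorm, hFdef, hGdef, L, ContinuousLinearMap.mul_apply'] using this
  calc bNorm s (fun ξ => (∫ η, vW η * vu (ξ - η)) / ((α : ℂ) + (‖ξ‖ : ℂ) ^ 2))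
      ≤ ∫ ξ, (2:ℝ)^(s/2) / α * ∫ η, F η * G (ξ - η) := by
        apply integral_mono_of_nonneg _ (hFGconv.const_mul _) hkey
        exact Filter.Eventually.of_forall fun ξ =>
          mul_nonneg (norm_nonneg _) (bWeight_pos s ξ).le
    _ = (2:ℝ)^(s/2) / α * ∫ ξ, ∫ η, F η * G (ξ - η) := integral_const_mul _ _
    _ = (2:ℝ)^(s/2) * bNorm s vW / α * bNorm s vu := by rw [hconvint]; ring
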